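/- Let λ > 0, n ∈ ℕ with n ≥ 1, and let w = (w_1,…,w_{n+1}) be drawn from the (n+1)-fold product of the exponential distribution with rate λ. Let f(D) = (1/n)·Σ_{i=1}^n D_i denote the sample mean of a database D ∈ ℝ^n, and set D = (w_1,…,w_n), D' = (w_1,…,w_{n−1},w_{n+1}). Then for every Δ ≥ 0, ℙ(|f(D) − f(D')| ≤ Δ) = 1 − e^{−λnΔ}; in particular this probability is at least 1 − γ for γ ∈ (0,1) whenever Δ ≥ log(1/γ)/(λn). -/

import Mathlib

open MeasureTheory ProbabilityTheory Real
open scoped ENNReal BigOperators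

open Set

lemma myExp_Iic (r : ℝ) (hr : 0 < r) (x : ℝ) :
    expMeasure r (Set.Iic x) = ENNReal.ofReal (if 0 ≤ x then 1 - Real.exp (-(r*x)) else 0) := by
  rw [expMeasure, gammaMeasure, withDensity_apply _ measurableSet_Iic]
  exact lintegral_exponentialPDF_eq_antiDeriv hr x

lemma myExp_Ioi (r : ℝ) (hr : 0 < r) {t : ℝ} (ht : 0 ≤ t) :
    expMeasure r (Set.Ioi t) = ENNReal.ofReal (Real.exp (-(r*t))) := by
  have hP : IsProbabilityMeasure (expMeasure r) := isProbabilityMeasure_expMeasure hr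
  have h := measure_compl (μ := expMeasure r) (measurableSet_Iic (a := t)) (measure_ne_top _ _)
  rw [Set.compl_Iic] at h
  rw [h, measure_univ, myExp_Iic r hr, if_pos ht]
  have he : Real.exp (-(r*t)) ≤ 1 := Real.exp_le_one_iff.mpr (by nlinarith)
  rw [show (1:ℝ≥0∞) = ENNReal.ofReal 1 by simp,
    ← ENNReal.ofReal_sub _ (by linarith [Real.exp_pos (-(r*t))])]
  norm_num

lemma region_measure (r : ℝ) (hr : 0 < r) (c : ℝ) (hc : 0 ≤ c) :
    ((expMeasure r).prod (expMeasure r)) {p : ℝ × ℝ | p.1 + c < p.2}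
      = ENNReal.ofReal (Real.exp (-(r*c)) / 2) := by
  have hP : IsProbabilityMeasure (expMeasure r) := isProbabilityMeasure_expMeasure hr
  have hmeas : MeasurableSet {p : ℝ × ℝ | p.1 + c < p.2} :=
    measurableSet_lt (measurable_fst.add_const c) measurable_snd
  rw [Measure.prod_apply hmeas]
  have hslice : ∀ x : ℝ, (Prod.mk x ⁻¹' {p : ℝ × ℝ | p.1 + c < p.2}) = Set.Ioi (x + c) :=
    fun x => rfl
  simp_rw [hslice]
  have hpdf : Measurable (exponentialPDF r) :=
    fun s hs => (measurable_exponentialPDFReal r).ennreal_ofReal hs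
  have hpdf2 : Measurable (exponentialPDF (2*r)) :=
    fun s hs => (measurable_exponentialPDFReal (2*r)).ennreal_ofReal hs
  have hg : Measurable fun x : ℝ => expMeasure r (Set.Ioi (x + c)) := by
    apply Antitone.measurable
    intro x y hxy
    exact measure_mono (fun z hz => lt_of_le_of_lt (by linarith : x + c ≤ y + c) hz)
  have hfun : ∀ x : ℝ, exponentialPDF r x * expMeasure r (Set.Ioi (x + c))
      = ENNReal.ofReal (Real.exp (-(r*c)) / 2) * exponentialPDF (2*r) x := by
    intro x
    rcases le_or_gt 0 x with hx | hx
    · rw [exponentialPDF_of_nonneg hx, exponentialPDF_of_nonneg hx,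
        myExp_Ioi r hr (by linarith), ← ENNReal.ofReal_mul (by positivity),
        ← ENNReal.ofReal_mul (by positivity)]
      congr 1
      have hx2 : rexp (-(r * x)) * rexp (-(r * (x + c))) = rexp (-(r*c)) * rexp (-(2*r*x)) := by
        rw [← Real.exp_add, ← Real.exp_add]; ring_nf
      linear_combination r * hx2
    · rw [exponentialPDF_of_neg hx, exponentialPDF_of_neg hx, zero_mul, mul_zero]
  calc ∫⁻ x, expMeasure r (Set.Ioi (x + c)) ∂(expMeasure r)
      = ∫⁻ x, (exponentialPDF r * fun x => expMeasure r (Set.Ioi (x + c))) x :=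
        lintegral_withDensity_eq_lintegral_mul volume hpdf hg
    _ = ∫⁻ x, ENNReal.ofReal (Real.exp (-(r*c)) / 2) * exponentialPDF (2*r) x := by
        simp only [Pi.mul_apply]
        exact lintegral_congr hfun
    _ = ENNReal.ofReal (Real.exp (-(r*c)) / 2) * ∫⁻ x, exponentialPDF (2*r) x :=
        lintegral_const_mul _ hpdf2
    _ = ENNReal.ofReal (Real.exp (-(r*c)) / 2) := by
        rw [lintegral_exponentialPDF_eq_one (by linarith), mul_one]

lemma pair_measure (r : ℝ) (hr : 0 < r) (c : ℝ) (hc : 0 ≤ c) :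
    ((expMeasure r).prod (expMeasure r)) {p : ℝ × ℝ | |p.1 - p.2| ≤ c}
      = ENNReal.ofReal (1 - Real.exp (-(r*c))) := by
  have hP : IsProbabilityMeasure (expMeasure r) := isProbabilityMeasure_expMeasure hr
  have hS : MeasurableSet {p : ℝ × ℝ | |p.1 - p.2| ≤ c} :=
    measurableSet_le ((measurable_fst.sub measurable_snd).abs) measurable_const
  have hR1 : MeasurableSet {p : ℝ × ℝ | p.1 + c < p.2} :=
    measurableSet_lt (measurable_fst.add_const c) measurable_snd
  have hR2 : MeasurableSet {p : ℝ × ℝ | p.2 + c < p.1} :=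
    measurableSet_lt (measurable_snd.add_const c) measurable_fst
  have hcompl : {p : ℝ × ℝ | |p.1 - p.2| ≤ c}ᶜ
      = {p : ℝ × ℝ | p.1 + c < p.2} ∪ {p : ℝ × ℝ | p.2 + c < p.1} := by
    ext p
    simp only [Set.mem_compl_iff, Set.mem_setOf_eq, Set.mem_union, not_le, lt_abs]
    constructor
    · rintro (h | h)
      · right; linarith
      · left; linarith
    · rintro (h | h)
      · right; linarith
      · left; linarith
  have hdisj : Disjoint {p : ℝ × ℝ | p.1 + c < p.2} {p : ℝ × ℝ | p.2 + c < p.1} := by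
    rw [Set.disjoint_left]
    intro p h1 h2
    simp only [Set.mem_setOf_eq] at h1 h2
    linarith
  have hswap : ((expMeasure r).prod (expMeasure r)) {p : ℝ × ℝ | p.2 + c < p.1}
      = ((expMeasure r).prod (expMeasure r)) {p : ℝ × ℝ | p.1 + c < p.2} := by
    have : {p : ℝ × ℝ | p.2 + c < p.1} = Prod.swap ⁻¹' {p : ℝ × ℝ | p.1 + c < p.2} := rfl
    rw [this, ← Measure.map_apply measurable_swap hR1, Measure.prod_swap]
  have hc' : ((expMeasure r).prod (expMeasure r)) {p : ℝ × ℝ | |p.1 - p.2| ≤ c}ᶜ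
      = ENNReal.ofReal (Real.exp (-(r*c))) := by
    rw [hcompl, measure_union hdisj hR2, hswap, region_measure r hr c hc,
      ← ENNReal.ofReal_add (by positivity) (by positivity)]
    norm_num
  have h := measure_compl (μ := (expMeasure r).prod (expMeasure r)) hS (measure_ne_top _ _)
  rw [hc', measure_univ] at h
  have he : Real.exp (-(r*c)) ≤ 1 := Real.exp_le_one_iff.mpr (by nlinarith)
  have h2 := measure_compl (μ := (expMeasure r).prod (expMeasure r)) hS.compl (measure_ne_top _ _)
  rw [compl_compl, hc', measure_univ] at h2
  rw [h2, show (1:ℝ≥0∞) = ENNReal.ofReal 1 by simp,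
    ← ENNReal.ofReal_sub _ (le_of_lt (Real.exp_pos _))]

lemma map_pair_measure (r : ℝ) (hr : 0 < r) {m : ℕ} (a b : Fin m) (hab : a ≠ b) :
    Measure.map (fun w : Fin m → ℝ => (w a, w b)) (Measure.pi fun _ => expMeasure r)
      = (expMeasure r).prod (expMeasure r) := by
  have hP : IsProbabilityMeasure (expMeasure r) := isProbabilityMeasure_expMeasure hr
  refine (Measure.prod_eq fun s t hs ht => ?_).symm
  rw [Measure.map_apply ((measurable_pi_apply a).prodMk (measurable_pi_apply b))
    (hs.prod ht)]
  have hpre : (fun w : Fin m → ℝ => (w a, w b)) ⁻¹' (s ×ˢ t)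
      = Set.pi Set.univ (fun i => if i = a then s else if i = b then t else Set.univ) := by
    ext w
    simp only [Set.mem_preimage, Set.mem_prod, Set.mem_pi, Set.mem_univ, forall_true_left]
    constructor
    · intro ⟨h1, h2⟩ i
      by_cases hia : i = a
      · subst hia; simp [h1]
      · by_cases hib : i = b
        · subst hib; simp [hab.symm ∘ Eq.symm, hia, h2]
        · simp [hia, hib]
    · intro h
      refine ⟨?_, ?_⟩
      · have := h a; simpa using this
      · have := h b
        rw [if_neg (Ne.symm hab), if_pos rfl] at this
        exact this
  rw [hpre, Measure.pi_pi]
  have : ∀ i : Fin m, expMeasure r (if i = a then s else if i = b then t else Set.univ)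
      = if i = a then expMeasure r s else if i = b then expMeasure r t else 1 := by
    intro i
    split_ifs <;> simp
  rw [Finset.prod_congr rfl (fun i _ => this i)]
  rw [← Finset.prod_subset (Finset.subset_univ {a, b}) (by
    intro i _ hi
    simp only [Finset.mem_insert, Finset.mem_singleton, not_or] at hi
    rw [if_neg hi.1, if_neg hi.2])]
  rw [Finset.prod_pair hab]
  rw [if_pos rfl, if_neg (Ne.symm hab), if_pos rfl]


/-- For `w ~ Exp(λ)^{⊗(n+1)}` and the induced neighbouring pair
`D = (w_1,…,w_n)`, `D' = (w_1,…,w_{n−1},w_{n+1})`, the sample means satisfy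
`ℙ(|f(D) − f(D')| ≤ Δ) = 1 − e^{−λnΔ}` for every `Δ ≥ 0`; in particular this probability is
at least `1 − γ` whenever `Δ ≥ log(1/γ)/(λn)`. -/
theorem sampleMean_sensitivity_exponential
    (lam : ℝ) (hlam : 0 < lam) (n : ℕ) (hn : 1 ≤ n)
    (Δ : ℝ) (hΔ : 0 ≤ Δ)
    (A : Set (Fin (n + 1) → ℝ))
    (hAdef : A = {w : Fin (n + 1) → ℝ |
      |(1 / (n : ℝ)) * (∑ i : Fin n, w i.castSucc) -
        (1 / (n : ℝ)) * (∑ i : Fin n,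
          if (i : ℕ) = n - 1 then w (Fin.last n) else w i.castSucc)| ≤ Δ}) :
    (Measure.pi fun _ : Fin (n + 1) => expMeasure lam) A =
      ENNReal.ofReal (1 - Real.exp (-(lam * n * Δ))) ∧
    (∀ γ : ℝ, 0 < γ → γ < 1 → Real.log (1/γ) / (lam * n) ≤ Δ →
      1 - γ ≤ ((Measure.pi fun _ : Fin (n + 1) => expMeasure lam) A).toReal) := by

  have hn0 : (0:ℝ) < n := by exact_mod_cast hn
  have hj : n - 1 < n := by omega
  set j : Fin n := ⟨n - 1, hj⟩ with hjdef
  set a : Fin (n+1) := j.castSucc with hadef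
  set b : Fin (n+1) := Fin.last n with hbdef
  have hab : a ≠ b := by
    simp only [hadef, hbdef, Fin.ne_iff_vne, Fin.coe_castSucc, Fin.val_last, hjdef]
    omega
  have hsum : ∀ w : Fin (n+1) → ℝ,
      (∑ i : Fin n, w i.castSucc) -
        (∑ i : Fin n, if (i:ℕ) = n - 1 then w (Fin.last n) else w i.castSucc)
      = w a - w b := by
    intro w
    rw [← Finset.sum_sub_distrib]
    have hterm : ∀ i : Fin n,
        (w i.castSucc - if (i:ℕ) = n - 1 then w (Fin.last n) else w i.castSucc)
        = if i = j then w a - w b else 0 := by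
      intro i
      by_cases h : (i:ℕ) = n - 1
      · have hij : i = j := Fin.ext h
        rw [if_pos h, if_pos hij, hij]
      · rw [if_neg h, sub_self, if_neg (fun hh => h (by rw [hh]))]
    rw [Finset.sum_congr rfl fun i _ => hterm i, Finset.sum_ite_eq' Finset.univ j]
    simp
  have hA : A = (fun w : Fin (n+1) → ℝ => (w a, w b)) ⁻¹'
      {p : ℝ × ℝ | |p.1 - p.2| ≤ (n:ℝ) * Δ} := by
    rw [hAdef]
    ext w
    simp only [Set.mem_setOf_eq, Set.mem_preimage]
    rw [← mul_sub, hsum w, abs_mul, abs_of_nonneg (by positivity : (0:ℝ) ≤ 1/(n:ℝ)),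
      show (1/(n:ℝ)) * |w a - w b| = |w a - w b| / n from by ring, div_le_iff₀ hn0, mul_comm]
  have hS : MeasurableSet {p : ℝ × ℝ | |p.1 - p.2| ≤ (n:ℝ)*Δ} :=
    measurableSet_le ((measurable_fst.sub measurable_snd).abs) measurable_const
  have hmain : (Measure.pi fun _ : Fin (n+1) => expMeasure lam) A
      = ENNReal.ofReal (1 - Real.exp (-(lam * n * Δ))) := by
    rw [hA, ← Measure.map_apply ((measurable_pi_apply a).prodMk (measurable_pi_apply b)) hS,
      map_pair_measure lam hlam a b hab, pair_measure lam hlam ((n:ℝ)*Δ) (by positivity),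
      mul_assoc]
  refine ⟨hmain, ?_⟩
  intro γ hγ0 hγ1 hΔγ
  rw [hmain]
  have hpos : (0:ℝ) < lam * n := by positivity
  have hle : Real.exp (-(lam * n * Δ)) ≤ γ := by
    rw [← Real.exp_log hγ0]
    apply Real.exp_le_exp.mpr
    rw [div_le_iff₀ hpos] at hΔγ
    have hln : Real.log (1/γ) = - Real.log γ := by rw [one_div, Real.log_inv]
    nlinarith
  rw [ENNReal.toReal_ofReal (by linarith)]
  linarith
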